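/- arXiv:1601.01231 — 2 statements merged into one kernel-verified Lean document; each statement's English description precedes it below -/
import Mathlib

section
/- Fix integers k ≥ 0 and n ≥ k+3. Then the average over all permutations σ of {1, …, n} of the number of edges E(σ) of the associated semi-bar k-visibility graph satisfies (1/n!) · Σ_{σ ∈ S_n} E(σ) = (1/2)(k+1)(4n − 3k − 6 − 2(k+2) Σ_{l=k+3}^{n} 1/l). -/
open Finset

namespace SemiBarAux

open scoped Classical

variable {n : ℕ}

/-- The window of positions between `i` and `j` inclusive. -/
def Wdw (i j : Fin n) : Finset (Fin n) := Finset.Icc i j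

/-- The set of values taken by `σ` on the window. -/
def Sv (σ : Equiv.Perm (Fin n)) (i j : Fin n) : Finset (Fin n) := (Wdw i j).image σ

lemma card_Wdw {i j : Fin n} (h : i ≤ j) :
    (Wdw i j).card = (j : ℕ) - (i : ℕ) + 1 := by
  have h' : (i : ℕ) ≤ (j : ℕ) := h
  rw [Wdw, Fin.card_Icc]; omega

lemma card_Sv (σ : Equiv.Perm (Fin n)) {i j : Fin n} (h : i ≤ j) :
    (Sv σ i j).card = (j : ℕ) - (i : ℕ) + 1 := by
  rw [Sv, Finset.card_image_of_injective _ σ.injective, card_Wdw h]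

/-- The order isomorphism enumerating the window values. -/
noncomputable def eIso (σ : Equiv.Perm (Fin n)) (i j : Fin n) (h : i ≤ j) :
    Fin ((j : ℕ) - (i : ℕ) + 1) ≃o {x // x ∈ Sv σ i j} :=
  (Sv σ i j).orderIsoOfFin (card_Sv σ h)

lemma mem_Sv {σ : Equiv.Perm (Fin n)} {i j w : Fin n} (hw : w ∈ Wdw i j) :
    σ w ∈ Sv σ i j := Finset.mem_image_of_mem σ hw

/-- The rank (from below, 0-based) of `σ w` among the window values. -/
noncomputable def rnk (σ : Equiv.Perm (Fin n)) (i j : Fin n) (h : i ≤ j) (w : Fin n)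
    (hw : w ∈ Wdw i j) : Fin ((j : ℕ) - (i : ℕ) + 1) :=
  (eIso σ i j h).symm ⟨σ w, mem_Sv hw⟩

lemma rnk_le_rnk (σ : Equiv.Perm (Fin n)) {i j : Fin n} (h : i ≤ j) {w w' : Fin n}
    (hw : w ∈ Wdw i j) (hw' : w' ∈ Wdw i j) :
    rnk σ i j h w hw ≤ rnk σ i j h w' hw' ↔ σ w ≤ σ w' := by
  rw [rnk, rnk, (eIso σ i j h).symm.le_iff_le, Subtype.mk_le_mk]

lemma rnk_inj (σ : Equiv.Perm (Fin n)) {i j : Fin n} (h : i ≤ j) {w w' : Fin n}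
    (hw : w ∈ Wdw i j) (hw' : w' ∈ Wdw i j)
    (hr : rnk σ i j h w hw = rnk σ i j h w' hw') : w = w' := by
  rw [rnk, rnk] at hr
  have := (eIso σ i j h).symm.injective hr
  exact σ.injective (Subtype.ext_iff.mp this)

/-- Counting elements of the window with value at most `σ w`. -/
lemma card_le_rnk (σ : Equiv.Perm (Fin n)) {i j : Fin n} (h : i ≤ j) {w : Fin n}
    (hw : w ∈ Wdw i j) :
    ((Wdw i j).filter (fun w' => σ w' ≤ σ w)).card = (rnk σ i j h w hw : ℕ) + 1 := by
  have key : ((Wdw i j).filter (fun w' => σ w' ≤ σ w)).card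
      = (Finset.Iic (rnk σ i j h w hw)).card := by
    apply Finset.card_bij (fun w' hw' => rnk σ i j h w' (Finset.mem_of_mem_filter _ hw'))
    · intro w' hw'
      exact Finset.mem_Iic.mpr ((rnk_le_rnk σ h _ hw).mpr (Finset.mem_filter.mp hw').2)
    · intro w1 h1 w2 h2 heq
      exact rnk_inj σ h _ _ heq
    · intro u hu
      obtain ⟨w', hw', hval⟩ := Finset.mem_image.mp ((eIso σ i j h u).2)
      have hle : σ w' ≤ σ w := by
        have h1 : eIso σ i j h u ≤ eIso σ i j h (rnk σ i j h w hw) :=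
          (eIso σ i j h).monotone (Finset.mem_Iic.mp hu)
        rw [rnk, OrderIso.apply_symm_apply] at h1
        rw [hval]
        exact h1
      have huniq : ∀ hm : w' ∈ Wdw i j, rnk σ i j h w' hm = u := by
        intro hm
        rw [rnk, show (⟨σ w', mem_Sv hm⟩ : {x // x ∈ Sv σ i j}) = eIso σ i j h u from
          Subtype.ext hval]
        exact OrderIso.symm_apply_apply _ _
      exact ⟨w', Finset.mem_filter.mpr ⟨hw', hle⟩, huniq _⟩
  rw [key, Fin.card_Iic]

/-- Modify `σ` by permuting the ranks of window values by `π`. -/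
noncomputable def Tmap (σ : Equiv.Perm (Fin n)) (i j : Fin n) (h : i ≤ j)
    (π : Equiv.Perm (Fin ((j : ℕ) - (i : ℕ) + 1))) : Equiv.Perm (Fin n) :=
  (π.extendDomain (eIso σ i j h).toEquiv) * σ

lemma Sv_Tmap (σ : Equiv.Perm (Fin n)) {i j : Fin n} (h : i ≤ j)
    (π : Equiv.Perm (Fin ((j : ℕ) - (i : ℕ) + 1))) :
    Sv (Tmap σ i j h π) i j = Sv σ i j := by
  have h1 : Sv (Tmap σ i j h π) i j
      = (Sv σ i j).image (π.extendDomain (eIso σ i j h).toEquiv) := by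
    simp only [Sv, Tmap, Finset.image_image, Equiv.Perm.coe_mul]
  rw [h1]
  refine Finset.eq_of_subset_of_card_le ?_ ?_
  · intro x hx
    obtain ⟨y, hy, rfl⟩ := Finset.mem_image.mp hx
    rw [Equiv.Perm.extendDomain_apply_subtype _ _ hy]
    exact ((eIso σ i j h).toEquiv (π ((eIso σ i j h).toEquiv.symm ⟨y, hy⟩))).2
  · rw [Finset.card_image_of_injective _ (Equiv.injective _)]

lemma orderIsoOfFin_val_congr {α : Type*} [LinearOrder α] {s t : Finset α} (hst : s = t)
    {m : ℕ} (hs : s.card = m) (ht : t.card = m) (x : Fin m) :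
    ((s.orderIsoOfFin hs x : α)) = (t.orderIsoOfFin ht x : α) := by
  subst hst; rfl

lemma orderIsoOfFin_symm_congr {α : Type*} [LinearOrder α] {s t : Finset α} (hst : s = t)
    {m : ℕ} (hs : s.card = m) (ht : t.card = m) {v : α} (hv : v ∈ s) (hv' : v ∈ t) :
    (s.orderIsoOfFin hs).symm ⟨v, hv⟩ = (t.orderIsoOfFin ht).symm ⟨v, hv'⟩ := by
  subst hst; rfl

lemma rnk_Tmap (σ : Equiv.Perm (Fin n)) {i j : Fin n} (h : i ≤ j)
    (π : Equiv.Perm (Fin ((j : ℕ) - (i : ℕ) + 1))) {w : Fin n} (hw : w ∈ Wdw i j) :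
    rnk (Tmap σ i j h π) i j h w hw = π (rnk σ i j h w hw) := by
  have hS := Sv_Tmap σ h π
  apply (eIso (Tmap σ i j h π) i j h).injective
  apply Subtype.ext
  have h0 : ((eIso (Tmap σ i j h π) i j h (rnk (Tmap σ i j h π) i j h w hw) : Fin n))
      = (Tmap σ i j h π) w := by
    rw [rnk, OrderIso.apply_symm_apply]
  have h1 : ((eIso (Tmap σ i j h π) i j h (π (rnk σ i j h w hw)) : Fin n))
      = (eIso σ i j h (π (rnk σ i j h w hw)) : Fin n) :=
    orderIsoOfFin_val_congr hS _ _ _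
  rw [h0, h1]
  show (π.extendDomain (eIso σ i j h).toEquiv) (σ w) = _
  rw [Equiv.Perm.extendDomain_apply_subtype _ _ (mem_Sv hw)]
  rfl

lemma extendDomain_eIso_congr {σ σ' : Equiv.Perm (Fin n)} {i j : Fin n} (h : i ≤ j)
    (hS : Sv σ' i j = Sv σ i j) (π : Equiv.Perm (Fin ((j : ℕ) - (i : ℕ) + 1))) :
    π.extendDomain (eIso σ' i j h).toEquiv = π.extendDomain (eIso σ i j h).toEquiv := by
  have gen : ∀ (s t : Finset (Fin n)) (hst : s = t) (hs : s.card = (j : ℕ) - (i : ℕ) + 1)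
      (ht : t.card = (j : ℕ) - (i : ℕ) + 1),
      π.extendDomain (s.orderIsoOfFin hs).toEquiv = π.extendDomain (t.orderIsoOfFin ht).toEquiv := by
    rintro s t rfl hs ht
    rfl
  exact gen _ _ hS (card_Sv σ' h) (card_Sv σ h)

lemma Tmap_Tmap (σ : Equiv.Perm (Fin n)) {i j : Fin n} (h : i ≤ j)
    (π : Equiv.Perm (Fin ((j : ℕ) - (i : ℕ) + 1))) :
    Tmap (Tmap σ i j h π) i j h π⁻¹ = σ := by
  show (π⁻¹.extendDomain (eIso (Tmap σ i j h π) i j h).toEquiv) * Tmap σ i j h π = σ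
  rw [extendDomain_eIso_congr h (Sv_Tmap σ h π), Tmap, ← mul_assoc,
    Equiv.Perm.extendDomain_mul, inv_mul_cancel, Equiv.Perm.extendDomain_one, one_mul]

/-- Rank of position `i` (the left endpoint). -/
noncomputable def ri (σ : Equiv.Perm (Fin n)) {i j : Fin n} (hij : i < j) :
    Fin ((j : ℕ) - (i : ℕ) + 1) :=
  rnk σ i j hij.le i (Finset.mem_Icc.mpr ⟨le_refl i, hij.le⟩)

/-- Rank of position `j` (the right endpoint). -/
noncomputable def rj (σ : Equiv.Perm (Fin n)) {i j : Fin n} (hij : i < j) :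
    Fin ((j : ℕ) - (i : ℕ) + 1) :=
  rnk σ i j hij.le j (Finset.mem_Icc.mpr ⟨hij.le, le_refl j⟩)

lemma ri_ne_rj (σ : Equiv.Perm (Fin n)) {i j : Fin n} (hij : i < j) :
    ri σ hij ≠ rj σ hij := by
  intro hcon
  exact absurd (rnk_inj σ hij.le _ _ hcon) hij.ne

/-- The rank-based adjacency condition. -/
def goodCond (k : ℕ) (σ : Equiv.Perm (Fin n)) {i j : Fin n} (hij : i < j) : Prop :=
  (j : ℕ) - (i : ℕ) ≤ (ri σ hij : ℕ) + k + 1 ∧ (j : ℕ) - (i : ℕ) ≤ (rj σ hij : ℕ) + k + 1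

/-- Counting middles above the min endpoint, generic version. -/
lemma mid_card_gen (σ : Equiv.Perm (Fin n)) {i j : Fin n} (hij : i < j) {w0 w1 : Fin n}
    (hw0 : w0 ∈ Wdw i j) (hw1 : w1 = i ∨ w1 = j)
    (hmin : σ w0 = min (σ i) (σ j)) (hmax : σ w1 = max (σ i) (σ j)) :
    (univ.filter (fun m : Fin n => i < m ∧ m < j ∧ min (σ i) (σ j) < σ m)).card + 1 +
      ((rnk σ i j hij.le w0 hw0 : ℕ) + 1) = ((j : ℕ) - (i : ℕ)) + 1 := by
  have hne : σ i ≠ σ j := fun hcon => hij.ne (σ.injective hcon)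
  set mid := univ.filter (fun m : Fin n => i < m ∧ m < j ∧ min (σ i) (σ j) < σ m) with hmid
  have hWcard : (Wdw i j).card = ((j : ℕ) - (i : ℕ)) + 1 := card_Wdw hij.le
  have hlow : ((Wdw i j).filter (fun w' => σ w' ≤ σ w0)).card = (rnk σ i j hij.le w0 hw0 : ℕ) + 1 :=
    card_le_rnk σ hij.le hw0
  have hsplit : ((Wdw i j).filter (fun w' => min (σ i) (σ j) < σ w')).card +
      ((Wdw i j).filter (fun w' => σ w' ≤ σ w0)).card = (Wdw i j).card := by
    have heqf : (Wdw i j).filter (fun w' => σ w' ≤ σ w0)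
        = (Wdw i j).filter (fun w' => ¬ min (σ i) (σ j) < σ w') := by
      apply Finset.filter_congr
      intro m _
      rw [hmin]
      simp [not_lt]
    rw [heqf]
    exact Finset.card_filter_add_card_filter_not _
  have hins : (Wdw i j).filter (fun w' => min (σ i) (σ j) < σ w') = insert w1 mid := by
    ext m
    simp only [Finset.mem_filter, Finset.mem_insert, hmid, Finset.mem_univ, true_and, Wdw,
      Finset.mem_Icc]
    constructor
    · rintro ⟨⟨him, hmj⟩, hlt⟩
      rcases eq_or_lt_of_le him with heq | him'
      · left
        have hji : σ j < σ m := by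
          rcases min_lt_iff.mp hlt with hx | hx
          · rw [heq] at hx
            exact absurd hx (lt_irrefl _)
          · exact hx
        have : σ w1 = σ m := by rw [hmax, heq, max_eq_left hji.le]
        exact (σ.injective this).symm
      rcases eq_or_lt_of_le hmj with heq | hmj'
      · left
        have hij' : σ i < σ m := by
          rcases min_lt_iff.mp hlt with hx | hx
          · exact hx
          · rw [← heq] at hx
            exact absurd hx (lt_irrefl _)
        have : σ w1 = σ m := by rw [hmax, ← heq, max_eq_right hij'.le]
        exact (σ.injective this).symm
      · exact Or.inr ⟨him', hmj', hlt⟩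
    · rintro (rfl | ⟨h1, h2, h3⟩)
      · refine ⟨?_, ?_⟩
        · rcases hw1 with rfl | rfl
          · exact ⟨le_refl _, hij.le⟩
          · exact ⟨hij.le, le_refl _⟩
        · rw [hmax]
          exact min_lt_max.mpr hne
      · exact ⟨⟨h1.le, h2.le⟩, h3⟩
  have hnotmem : w1 ∉ mid := by
    rcases hw1 with rfl | rfl
    · simp [hmid]
    · simp [hmid]
  have hinscard : ((Wdw i j).filter (fun w' => min (σ i) (σ j) < σ w')).card = mid.card + 1 := by
    rw [hins, Finset.card_insert_of_notMem hnotmem]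
  omega

/-- The middle-count condition from the theorem statement, in rank terms. -/
lemma cond_iff (k : ℕ) (σ : Equiv.Perm (Fin n)) {i j : Fin n} (hij : i < j) :
    ({m : Fin n | i < m ∧ m < j ∧ min (σ i) (σ j) < σ m}.ncard ≤ k) ↔ goodCond k σ hij := by
  classical
  have hset : {m : Fin n | i < m ∧ m < j ∧ min (σ i) (σ j) < σ m}
      = ↑(univ.filter (fun m : Fin n => i < m ∧ m < j ∧ min (σ i) (σ j) < σ m)) := by
    ext m; simp
  rw [hset, Set.ncard_coe_finset]
  have hi : i ∈ Wdw i j := Finset.mem_Icc.mpr ⟨le_refl i, hij.le⟩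
  have hj : j ∈ Wdw i j := Finset.mem_Icc.mpr ⟨hij.le, le_refl j⟩
  rcases le_or_gt (σ i) (σ j) with hcmp | hcmp
  · have key := mid_card_gen σ hij hi (Or.inr rfl) (min_eq_left hcmp).symm
      (max_eq_right hcmp).symm
    have hler : (ri σ hij : ℕ) ≤ (rj σ hij : ℕ) := (rnk_le_rnk σ hij.le _ _).mpr hcmp
    have hri : rnk σ i j hij.le i hi = ri σ hij := rfl
    rw [hri] at key
    unfold goodCond
    omega
  · have key := mid_card_gen σ hij hj (Or.inl rfl) (min_eq_right hcmp.le).symm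
      (max_eq_left hcmp.le).symm
    have hler : (rj σ hij : ℕ) ≤ (ri σ hij : ℕ) := (rnk_le_rnk σ hij.le _ _).mpr hcmp.le
    have hrj : rnk σ i j hij.le j hj = rj σ hij := rfl
    rw [hrj] at key
    unfold goodCond
    omega


lemma exists_perm_pair {α : Type*} [DecidableEq α] {a b a' b' : α} (hab : a ≠ b)
    (hab' : a' ≠ b') : ∃ π : Equiv.Perm α, π a = a' ∧ π b = b' := by
  have hc : Equiv.swap a a' b ≠ a' := by
    rw [Equiv.swap_apply_def]
    split_ifs with h1 h2
    · exact absurd h1.symm hab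
    · exact fun hx => hab (by rw [hx, ← h2])
    · exact h2
  refine ⟨Equiv.swap (Equiv.swap a a' b) b' * Equiv.swap a a', ?_, ?_⟩
  · simp only [Equiv.Perm.mul_apply, Equiv.swap_apply_left]
    exact Equiv.swap_apply_of_ne_of_ne (Ne.symm hc) hab'
  · simp only [Equiv.Perm.mul_apply]
    rw [show Equiv.swap a a' b = Equiv.swap a a' b from rfl, Equiv.swap_apply_left]

/-- Fibers of the rank-pair map. -/
noncomputable def fib (k : ℕ) (i j : Fin n) (hij : i < j)
    (a b : Fin ((j : ℕ) - (i : ℕ) + 1)) : Finset (Equiv.Perm (Fin n)) :=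
  univ.filter (fun σ => ri σ hij = a ∧ rj σ hij = b)

lemma card_fib_eq (k : ℕ) (i j : Fin n) (hij : i < j)
    {a b a' b' : Fin ((j : ℕ) - (i : ℕ) + 1)} (hab : a ≠ b) (hab' : a' ≠ b') :
    (fib k i j hij a b).card = (fib k i j hij a' b').card := by
  obtain ⟨π, hπa, hπb⟩ := exists_perm_pair hab hab'
  have hri : ∀ (σ : Equiv.Perm (Fin n)) (τ : Equiv.Perm (Fin ((j : ℕ) - (i : ℕ) + 1))),
      ri (Tmap σ i j hij.le τ) hij = τ (ri σ hij) := fun σ τ => rnk_Tmap σ hij.le τ _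
  have hrj : ∀ (σ : Equiv.Perm (Fin n)) (τ : Equiv.Perm (Fin ((j : ℕ) - (i : ℕ) + 1))),
      rj (Tmap σ i j hij.le τ) hij = τ (rj σ hij) := fun σ τ => rnk_Tmap σ hij.le τ _
  apply Finset.card_nbij' (fun σ => Tmap σ i j hij.le π) (fun σ => Tmap σ i j hij.le π⁻¹)
  · intro σ hσ
    rw [fib, Finset.mem_coe, Finset.mem_filter] at hσ ⊢
    obtain ⟨-, h1, h2⟩ := hσ
    exact ⟨Finset.mem_univ _, by rw [hri, h1, hπa], by rw [hrj, h2, hπb]⟩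
  · intro σ hσ
    rw [fib, Finset.mem_coe, Finset.mem_filter] at hσ ⊢
    obtain ⟨-, h1, h2⟩ := hσ
    refine ⟨Finset.mem_univ _, ?_, ?_⟩
    · rw [hri, h1, ← hπa, Equiv.Perm.inv_def, Equiv.symm_apply_apply]
    · rw [hrj, h2, ← hπb, Equiv.Perm.inv_def, Equiv.symm_apply_apply]
  · intro σ _
    exact Tmap_Tmap σ hij.le π
  · intro σ _
    have := Tmap_Tmap σ hij.le π⁻¹
    rwa [inv_inv] at this

/-- Main per-pair counting identity. -/
lemma per_pair (k : ℕ) (i j : Fin n) (hij : i < j) :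
    (univ.filter (fun σ : Equiv.Perm (Fin n) => goodCond k σ hij)).card *
        (((j : ℕ) - (i : ℕ) + 1) * ((j : ℕ) - (i : ℕ) + 1) - ((j : ℕ) - (i : ℕ) + 1)) =
      ((((j : ℕ) - (i : ℕ) + 1) - (((j : ℕ) - (i : ℕ)) - (k + 1))) *
          (((j : ℕ) - (i : ℕ) + 1) - (((j : ℕ) - (i : ℕ)) - (k + 1))) -
        (((j : ℕ) - (i : ℕ) + 1) - (((j : ℕ) - (i : ℕ)) - (k + 1)))) *
        n.factorial := by
  classical
  set d : ℕ := (j : ℕ) - (i : ℕ) with hd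
  have hd1 : 1 ≤ d := by
    have : (i : ℕ) < (j : ℕ) := hij
    omega
  set D : ℕ := d + 1 with hD
  let a0 : Fin D := ⟨0, by omega⟩
  let b0 : Fin D := ⟨1, by omega⟩
  have hab0 : a0 ≠ b0 := by
    intro hcon
    have : (0 : ℕ) = 1 := congrArg Fin.val hcon
    omega
  set c := (fib k i j hij a0 b0).card with hc
  have hfib : ∀ a b : Fin D, a ≠ b → (fib k i j hij a b).card = c :=
    fun a b hab => card_fib_eq k i j hij hab hab0
  have htot : n.factorial = ((univ : Finset (Fin D)).offDiag).card * c := by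
    have h1 : (univ : Finset (Equiv.Perm (Fin n))).card = n.factorial := by
      rw [Finset.card_univ, Fintype.card_perm, Fintype.card_fin]
    rw [← h1, Finset.card_eq_sum_card_fiberwise
      (f := fun σ : Equiv.Perm (Fin n) => (ri σ hij, rj σ hij))
      (t := (univ : Finset (Fin D)).offDiag)
      (fun σ _ => Finset.mem_offDiag.mpr ⟨mem_univ _, mem_univ _, ri_ne_rj σ hij⟩)]
    rw [Finset.sum_congr rfl (fun p hp => ?_), Finset.sum_const, smul_eq_mul]
    have hne := (Finset.mem_offDiag.mp hp).2.2
    have heq : (univ.filter (fun σ : Equiv.Perm (Fin n) => (ri σ hij, rj σ hij) = p))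
        = fib k i j hij p.1 p.2 := by
      apply Finset.filter_congr
      intro σ _
      rw [Prod.ext_iff]
    rw [heq, hfib _ _ hne]
  set G : Finset (Fin D) := univ.filter (fun a : Fin D => d ≤ (a : ℕ) + k + 1) with hG
  have hNG : (univ.filter (fun σ : Equiv.Perm (Fin n) => goodCond k σ hij)).card
      = G.offDiag.card * c := by
    rw [Finset.card_eq_sum_card_fiberwise
      (f := fun σ : Equiv.Perm (Fin n) => (ri σ hij, rj σ hij)) (t := G.offDiag)
      (fun σ hσ => Finset.mem_offDiag.mpr
        ⟨Finset.mem_filter.mpr ⟨mem_univ _, ((Finset.mem_filter.mp hσ).2).1⟩,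
         Finset.mem_filter.mpr ⟨mem_univ _, ((Finset.mem_filter.mp hσ).2).2⟩,
         ri_ne_rj σ hij⟩)]
    rw [Finset.sum_congr rfl (fun p hp => ?_), Finset.sum_const, smul_eq_mul]
    obtain ⟨hp1, hp2, hpne⟩ := Finset.mem_offDiag.mp hp
    have heq : (univ.filter (fun σ : Equiv.Perm (Fin n) => goodCond k σ hij)).filter
        (fun σ => (ri σ hij, rj σ hij) = p) = fib k i j hij p.1 p.2 := by
      ext σ
      simp only [fib, Finset.mem_filter, Finset.mem_univ, true_and, Prod.ext_iff,
        Finset.filter_filter]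
      constructor
      · rintro ⟨-, h1, h2⟩
        exact ⟨h1, h2⟩
      · rintro ⟨h1, h2⟩
        refine ⟨⟨?_, ?_⟩, h1, h2⟩
        · rw [h1]
          exact (Finset.mem_filter.mp hp1).2
        · rw [h2]
          exact (Finset.mem_filter.mp hp2).2
    rw [heq, hfib _ _ hpne]
  have hGcard : G.card = D - (d - (k + 1)) := by
    have hG2 : G = univ.filter (fun a : Fin D => d - (k + 1) ≤ (a : ℕ)) := by
      apply Finset.filter_congr
      intro a _
      constructor
      · intro hx
        omega
      · intro hx
        omega
    rw [hG2]
    have : (univ.filter (fun a : Fin D => d - (k + 1) ≤ (a : ℕ))).card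
        = (Finset.Ico (d - (k + 1)) D).card := by
      refine Finset.card_nbij' (i := fun a : Fin D => (a : ℕ))
        (j := fun x : ℕ => (⟨x % D, Nat.mod_lt _ (by omega)⟩ : Fin D)) ?_ ?_ ?_ ?_
      · intro a ha
        have := (Finset.mem_filter.mp ha).2
        exact Finset.mem_Ico.mpr ⟨this, a.isLt⟩
      · intro x hx
        obtain ⟨hx1, hx2⟩ := Finset.mem_Ico.mp hx
        refine Finset.mem_filter.mpr ⟨mem_univ _, ?_⟩
        simp only [Nat.mod_eq_of_lt hx2]
        exact hx1
      · intro a _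
        apply Fin.ext
        simp [Nat.mod_eq_of_lt a.isLt]
      · intro x hx
        obtain ⟨hx1, hx2⟩ := Finset.mem_Ico.mp hx
        simp [Nat.mod_eq_of_lt hx2]
    rw [this, Nat.card_Ico]
  have hoffG : G.offDiag.card = (D - (d - (k + 1))) * (D - (d - (k + 1))) - (D - (d - (k + 1))) := by
    rw [Finset.offDiag_card, hGcard]
  have hoffU : ((univ : Finset (Fin D)).offDiag).card = D * D - D := by
    rw [Finset.offDiag_card, Finset.card_univ, Fintype.card_fin]
  rw [hNG, hoffG, htot, hoffU]
  ring

end SemiBarAux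

/-- The semi-bar `k`-visibility graph of the permutation `σ`: `i < j` are
adjacent iff at most `k` indices `m` with `i < m < j` satisfy
`σ m > min (σ i) (σ j)`. -/
def semiBarPermGraph (k : ℕ) {n : ℕ} (σ : Equiv.Perm (Fin n)) : SimpleGraph (Fin n) :=
  SimpleGraph.fromRel (fun i j => i < j ∧
    ({m : Fin n | i < m ∧ m < j ∧ min (σ i) (σ j) < σ m}.ncard ≤ k))

/-- The number of edges of the semi-bar `k`-visibility graph of `σ`. -/
noncomputable def semiBarPermEdges (k : ℕ) {n : ℕ} (σ : Equiv.Perm (Fin n)) : ℕ :=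
  (semiBarPermGraph k σ).edgeSet.ncard

namespace SemiBarAux

open scoped Classical

lemma edges_eq (k : ℕ) {n : ℕ} (σ : Equiv.Perm (Fin n)) :
    semiBarPermEdges k σ =
      (univ.filter (fun p : Fin n × Fin n => p.1 < p.2 ∧
        ({m : Fin n | p.1 < m ∧ m < p.2 ∧ min (σ p.1) (σ p.2) < σ m}.ncard ≤ k))).card := by
  classical
  set P : Finset (Fin n × Fin n) := univ.filter (fun p : Fin n × Fin n => p.1 < p.2 ∧
    ({m : Fin n | p.1 < m ∧ m < p.2 ∧ min (σ p.1) (σ p.2) < σ m}.ncard ≤ k)) with hP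
  have hmemP : ∀ p : Fin n × Fin n, p ∈ P ↔ p.1 < p.2 ∧
      ({m : Fin n | p.1 < m ∧ m < p.2 ∧ min (σ p.1) (σ p.2) < σ m}.ncard ≤ k) := by
    intro p
    rw [hP, Finset.mem_filter]
    simp
  have hedge : (semiBarPermGraph k σ).edgeSet
      = ↑(P.image (fun p : Fin n × Fin n => s(p.1, p.2))) := by
    ext e
    induction e with
    | h a b =>
      simp only [SimpleGraph.mem_edgeSet, Finset.coe_image, Set.mem_image, Finset.mem_coe]
      rw [semiBarPermGraph, SimpleGraph.fromRel_adj]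
      constructor
      · rintro ⟨hne, hr | hr⟩
        · exact ⟨(a, b), (hmemP (a, b)).mpr hr, rfl⟩
        · exact ⟨(b, a), (hmemP (b, a)).mpr hr, Sym2.eq_swap⟩
      · rintro ⟨p, hp, hpe⟩
        obtain ⟨h1, h2⟩ := (hmemP p).mp hp
        rcases Sym2.eq_iff.mp hpe with ⟨ha, hb⟩ | ⟨ha, hb⟩
        · refine ⟨?_, Or.inl ?_⟩
          · rw [← ha, ← hb]
            exact h1.ne
          · rw [← ha, ← hb]
            exact ⟨h1, h2⟩
        · refine ⟨?_, Or.inr ?_⟩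
          · rw [← ha, ← hb]
            exact h1.ne'
          · rw [← ha, ← hb]
            exact ⟨h1, h2⟩
  rw [semiBarPermEdges, hedge, Set.ncard_coe_finset]
  apply Finset.card_image_of_injOn
  intro p hp q hq hpq
  obtain ⟨hp1, -⟩ := (hmemP p).mp hp
  obtain ⟨hq1, -⟩ := (hmemP q).mp hq
  rcases Sym2.eq_iff.mp hpq with ⟨h1, h2⟩ | ⟨h1, h2⟩
  · exact Prod.ext h1 h2
  · exfalso
    rw [← h1, ← h2] at hq1
    exact absurd hp1 (asymm hq1)

end SemiBarAux

namespace SemiBarAux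

open scoped Classical

lemma pair_fiber_card (n dd : ℕ) (h1 : 1 ≤ dd) (h2 : dd < n) :
    ((univ : Finset (Fin n × Fin n)).filter
      (fun p => p.1 < p.2 ∧ (p.2 : ℕ) - (p.1 : ℕ) = dd)).card = n - dd := by
  have hn0 : 0 < n := by omega
  rw [← Finset.card_range (n - dd)]
  refine Finset.card_nbij' (i := fun p : Fin n × Fin n => (p.1 : ℕ))
    (j := fun x : ℕ => ((⟨x % n, Nat.mod_lt _ hn0⟩ : Fin n), (⟨(x + dd) % n, Nat.mod_lt _ hn0⟩ : Fin n)))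
    ?_ ?_ ?_ ?_
  · intro p hp
    obtain ⟨-, hlt, hdiff⟩ := Finset.mem_filter.mp hp
    have hlt' : (p.1 : ℕ) < (p.2 : ℕ) := hlt
    have h2' : (p.2 : ℕ) < n := p.2.isLt
    show (p.1 : ℕ) ∈ Finset.range (n - dd)
    exact Finset.mem_range.mpr (by omega)
  · intro x hx
    have hx' : x < n - dd := Finset.mem_range.mp hx
    have hxn : x < n := by omega
    have hxdn : x + dd < n := by omega
    refine Finset.mem_filter.mpr ⟨Finset.mem_univ _, ?_, ?_⟩
    · show (⟨x % n, _⟩ : Fin n) < (⟨(x + dd) % n, _⟩ : Fin n)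
      rw [Fin.lt_def]
      simp only [Nat.mod_eq_of_lt hxn, Nat.mod_eq_of_lt hxdn]
      omega
    · simp only [Nat.mod_eq_of_lt hxn, Nat.mod_eq_of_lt hxdn]
      omega
  · intro p hp
    obtain ⟨-, hlt, hdiff⟩ := Finset.mem_filter.mp hp
    have hlt' : (p.1 : ℕ) < (p.2 : ℕ) := hlt
    have h2' : (p.2 : ℕ) < n := p.2.isLt
    have h1' : (p.1 : ℕ) < n := p.1.isLt
    have hp2 : (p.1 : ℕ) + dd = (p.2 : ℕ) := by omega
    refine Prod.ext ?_ ?_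
    · apply Fin.ext
      simp [Nat.mod_eq_of_lt h1']
    · apply Fin.ext
      simp only [Nat.mod_eq_of_lt (show (p.1 : ℕ) + dd < n by omega)]
      exact hp2
  · intro x hx
    have hx' : x < n - dd := Finset.mem_range.mp hx
    simp [Nat.mod_eq_of_lt (show x < n by omega)]

lemma pair_sum_reindex (n : ℕ) (F : ℕ → ℝ) :
    ∑ p ∈ (univ : Finset (Fin n × Fin n)).filter (fun p => p.1 < p.2), F ((p.2 : ℕ) - (p.1 : ℕ))
      = ∑ dd ∈ Finset.Ico 1 n, ((n - dd : ℕ) : ℝ) * F dd := by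
  rw [← Finset.sum_fiberwise_of_maps_to (g := fun p : Fin n × Fin n => (p.2 : ℕ) - (p.1 : ℕ))
    (t := Finset.Ico 1 n) ?_]
  · apply Finset.sum_congr rfl
    intro dd hdd
    obtain ⟨hdd1, hdd2⟩ := Finset.mem_Ico.mp hdd
    rw [Finset.sum_congr rfl (fun p hp => by rw [(Finset.mem_filter.mp hp).2]),
      Finset.sum_const, nsmul_eq_mul]
    congr 1
    rw [Finset.filter_filter]
    rw [pair_fiber_card n dd hdd1 hdd2]
  · intro p hp
    have hlt : (p.1 : ℕ) < (p.2 : ℕ) := (Finset.mem_filter.mp hp).2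
    have h2' : (p.2 : ℕ) < n := p.2.isLt
    show (p.2 : ℕ) - (p.1 : ℕ) ∈ Finset.Ico 1 n
    exact Finset.mem_Ico.mpr ⟨by omega, by omega⟩

lemma gauss_Ico (k : ℕ) :
    (∑ dd ∈ Finset.Ico 1 (k + 2), ((dd : ℕ) : ℝ)) * 2 = (k + 1) * (k + 2) := by
  induction k with
  | zero => norm_num [Finset.sum_Ico_eq_sum_range]
  | succ m ih =>
    rw [show m + 1 + 2 = (m + 2) + 1 from rfl,
      Finset.sum_Ico_succ_top (by omega : 1 ≤ m + 2)]
    push_cast at ih ⊢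
    ring_nf at ih ⊢
    linarith

lemma tele_Ico (a b : ℕ) (ha : 1 ≤ a) (hab : a ≤ b) :
    ∑ dd ∈ Finset.Ico a b, ((1 : ℝ) / (dd : ℝ) - 1 / ((dd : ℝ) + 1))
      = 1 / (a : ℝ) - 1 / (b : ℝ) := by
  rw [Finset.sum_Ico_eq_sum_range]
  have h := Finset.sum_range_sub' (f := fun x => (1 : ℝ) / ((a + x : ℕ) : ℝ)) (b - a)
  rw [Finset.sum_congr rfl (fun x _ => ?_), h]
  · rw [show a + 0 = a from rfl, show a + (b - a) = b from by omega]
  · push_cast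
    ring

lemma harmonic_reindex (a n : ℕ) :
    ∑ dd ∈ Finset.Ico a n, (1 : ℝ) / ((dd : ℝ) + 1)
      = ∑ l ∈ Finset.Icc (a + 1) n, (1 : ℝ) / (l : ℝ) := by
  rw [← Finset.Ico_add_one_right_eq_Icc, Finset.sum_Ico_eq_sum_range, Finset.sum_Ico_eq_sum_range,
    show n + 1 - (a + 1) = n - a from by omega]
  apply Finset.sum_congr rfl
  intro x _
  push_cast
  ring

end SemiBarAux

/-- For `n ≥ k + 3`, the average number of edges of the semi-bar `k`-visibility
graph over all permutations of `{1, …, n}` equals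
`(1/2)(k+1)(4n - 3k - 6 - 2(k+2) ∑_{l=k+3}^n 1/l)`. -/
theorem expected_semiBar_edges (k n : ℕ) (hn : k + 3 ≤ n) :
    (∑ σ : Equiv.Perm (Fin n), (semiBarPermEdges k σ : ℝ)) / (n.factorial : ℝ) =
      (1 / 2) * (k + 1) *
        (4 * n - 3 * k - 6 - 2 * (k + 2) * ∑ l ∈ Finset.Icc (k + 3) n, (1 : ℝ) / l) := by
  classical
  have hn0 : 0 < n := by omega
  have hfac0 : ((n.factorial : ℝ)) ≠ 0 := Nat.cast_ne_zero.mpr n.factorial_ne_zero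
  set q : ℕ → ℝ := fun dd =>
    (((dd + 1 - (dd - (k + 1))) * (dd + 1 - (dd - (k + 1))) - (dd + 1 - (dd - (k + 1))) : ℕ) : ℝ)
      / (((dd + 1) * (dd + 1) - (dd + 1) : ℕ) : ℝ) with hq
  set Cnt : Fin n × Fin n → ℕ := fun p =>
    (univ.filter (fun σ : Equiv.Perm (Fin n) => p.1 < p.2 ∧
      ({m : Fin n | p.1 < m ∧ m < p.2 ∧ min (σ p.1) (σ p.2) < σ m}.ncard ≤ k))).card with hCnt
  have step1 : (∑ σ : Equiv.Perm (Fin n), (semiBarPermEdges k σ)) = ∑ p : Fin n × Fin n, Cnt p := by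
    rw [Finset.sum_congr rfl (fun σ _ => SemiBarAux.edges_eq k σ)]
    simp only [Finset.card_filter, hCnt]
    rw [Finset.sum_comm]
  have step2 : ∀ p : Fin n × Fin n, p.1 < p.2 →
      (Cnt p : ℝ) = (n.factorial : ℝ) * q ((p.2 : ℕ) - (p.1 : ℕ)) := by
    intro p hp
    have hCeq : Cnt p = (univ.filter
        (fun σ : Equiv.Perm (Fin n) => SemiBarAux.goodCond k σ hp)).card := by
      simp only [hCnt]
      congr 1
      apply Finset.filter_congr
      intro σ _
      constructor
      · rintro ⟨-, hx⟩
        exact (SemiBarAux.cond_iff k σ hp).mp hx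
      · intro hx
        exact ⟨hp, (SemiBarAux.cond_iff k σ hp).mpr hx⟩
    have hnum := SemiBarAux.per_pair k p.1 p.2 hp
    rw [← hCeq] at hnum
    set dd : ℕ := (p.2 : ℕ) - (p.1 : ℕ) with hdd
    have hdd1 : 1 ≤ dd := by
      have : (p.1 : ℕ) < (p.2 : ℕ) := hp
      omega
    have hden0 : ((dd + 1) * (dd + 1) - (dd + 1) : ℕ) ≠ 0 := by
      have h1' : (dd + 1) * (dd + 1) = (dd + 1) * dd + (dd + 1) := by ring
      have h2' : 0 < (dd + 1) * dd := Nat.mul_pos (by omega) (by omega)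
      omega
    have hdenR : (((dd + 1) * (dd + 1) - (dd + 1) : ℕ) : ℝ) ≠ 0 := Nat.cast_ne_zero.mpr hden0
    rw [hq]
    rw [mul_div_assoc']
    rw [eq_div_iff hdenR]
    exact_mod_cast hnum.trans (Nat.mul_comm _ _)
  have step3 : (∑ σ : Equiv.Perm (Fin n), (semiBarPermEdges k σ : ℝ)) =
      (n.factorial : ℝ) * ∑ dd ∈ Finset.Ico 1 n, ((n - dd : ℕ) : ℝ) * q dd := by
    have hcast : (∑ σ : Equiv.Perm (Fin n), (semiBarPermEdges k σ : ℝ))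
        = ∑ p : Fin n × Fin n, (Cnt p : ℝ) := by
      exact_mod_cast congrArg (Nat.cast : ℕ → ℝ) step1
    rw [hcast, ← Finset.sum_filter_add_sum_filter_not univ (fun p : Fin n × Fin n => p.1 < p.2)]
    have hzero : ∑ p ∈ univ.filter (fun p : Fin n × Fin n => ¬ p.1 < p.2), (Cnt p : ℝ) = 0 := by
      apply Finset.sum_eq_zero
      intro p hp
      have hnp := (Finset.mem_filter.mp hp).2
      have hzz : Cnt p = 0 := by
        simp only [hCnt]
        rw [Finset.card_eq_zero, Finset.filter_eq_empty_iff]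
        intro σ _
        exact fun hcon => hnp hcon.1
      rw [hzz]
      norm_num
    rw [hzero, add_zero,
      Finset.sum_congr rfl (fun p hp => step2 p (Finset.mem_filter.mp hp).2),
      ← Finset.mul_sum]
    congr 1
    exact SemiBarAux.pair_sum_reindex n q
  rw [step3, mul_div_cancel_left₀ _ hfac0]
  -- now pure arithmetic
  rw [← Finset.sum_Ico_consecutive _ (by omega : 1 ≤ k + 2) (by omega : k + 2 ≤ n)]
  have hS1 : ∑ dd ∈ Finset.Ico 1 (k + 2), ((n - dd : ℕ) : ℝ) * q dd
      = ∑ dd ∈ Finset.Ico 1 (k + 2), ((n : ℝ) - (dd : ℝ)) := by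
    apply Finset.sum_congr rfl
    intro dd hdd
    obtain ⟨h1, h2⟩ := Finset.mem_Ico.mp hdd
    have ht : dd + 1 - (dd - (k + 1)) = dd + 1 := by omega
    have hden0 : ((dd + 1) * (dd + 1) - (dd + 1) : ℕ) ≠ 0 := by
      have h1' : (dd + 1) * (dd + 1) = (dd + 1) * dd + (dd + 1) := by ring
      have h2' : 0 < (dd + 1) * dd := Nat.mul_pos (by omega) (by omega)
      omega
    have hq1 : q dd = 1 := by
      rw [hq]
      simp only [ht]
      exact div_self (Nat.cast_ne_zero.mpr hden0)
    rw [hq1, mul_one, Nat.cast_sub (by omega : dd ≤ n)]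
  have hS2 : ∑ dd ∈ Finset.Ico (k + 2) n, ((n - dd : ℕ) : ℝ) * q dd
      = ((k : ℝ) + 2) * ((k : ℝ) + 1) *
        ((n : ℝ) * ∑ dd ∈ Finset.Ico (k + 2) n, ((1 : ℝ) / (dd : ℝ) - 1 / ((dd : ℝ) + 1))
          - ∑ dd ∈ Finset.Ico (k + 2) n, (1 : ℝ) / ((dd : ℝ) + 1)) := by
    have hterm : ∀ dd ∈ Finset.Ico (k + 2) n, ((n - dd : ℕ) : ℝ) * q dd
        = ((k : ℝ) + 2) * ((k : ℝ) + 1) *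
          ((n : ℝ) * ((1 : ℝ) / (dd : ℝ) - 1 / ((dd : ℝ) + 1)) - 1 / ((dd : ℝ) + 1)) := by
      intro dd hdd
      obtain ⟨h1, h2⟩ := Finset.mem_Ico.mp hdd
      have ht : dd + 1 - (dd - (k + 1)) = k + 2 := by omega
      have hnum : (k + 2) * (k + 2) - (k + 2) = (k + 2) * (k + 1) := by
        have : (k + 2) * (k + 2) = (k + 2) * (k + 1) + (k + 2) := by ring
        omega
      have hden : (dd + 1) * (dd + 1) - (dd + 1) = dd * (dd + 1) := by
        have : (dd + 1) * (dd + 1) = dd * (dd + 1) + (dd + 1) := by ring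
        omega
      have hdd0 : ((dd : ℝ)) ≠ 0 := by
        have : (0 : ℕ) < dd := by omega
        positivity
      have hdd10 : ((dd : ℝ) + 1) ≠ 0 := by positivity
      rw [hq]
      simp only [ht, hnum, hden]
      rw [Nat.cast_sub (by omega : dd ≤ n)]
      push_cast
      field_simp
      ring
    rw [Finset.sum_congr rfl hterm, ← Finset.mul_sum]
    congr 1
    rw [Finset.sum_sub_distrib, ← Finset.mul_sum]
  rw [hS1, hS2, SemiBarAux.tele_Ico (k + 2) n (by omega) (by omega),
    SemiBarAux.harmonic_reindex (k + 2) n, show k + 2 + 1 = k + 3 from rfl]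
  rw [Finset.sum_sub_distrib, Finset.sum_const, Nat.card_Ico, nsmul_eq_mul]
  have hgauss := SemiBarAux.gauss_Ico k
  have hSval : ∑ dd ∈ Finset.Ico 1 (k + 2), ((dd : ℕ) : ℝ)
      = ((k : ℝ) + 1) * ((k : ℝ) + 2) / 2 := by
    push_cast at hgauss
    linarith
  rw [hSval]
  have hk2 : ((k : ℝ) + 2) ≠ 0 := by positivity
  have hnR : ((n : ℝ)) ≠ 0 := by positivity
  push_cast
  field_simp
  ring
end

section
/- Fix integers n ≥ 1 and 1 ≤ i ≤ n. For a permutation σ of {1, …, n}, let R_i(σ) be the number of indices j ∈ {1, …, n} such that σ(j) is the i-th largest value among σ(1), …, σ(j). Then the average over all permutations satisfies (1/n!) · Σ_{σ ∈ S_n} R_i(σ) = Σ_{j=i}^{n} 1/j. -/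
/-- `numIthRecords i σ` is the number of indices `j` such that `σ j` is the
`i`-th largest value among `σ 1, …, σ j`, i.e. exactly `i - 1` of the earlier
values exceed `σ j`. -/
noncomputable def numIthRecords (i : ℕ) {n : ℕ} (σ : Equiv.Perm (Fin n)) : ℕ :=
  {j : Fin n | ({m : Fin n | m < j ∧ σ j < σ m}).ncard = i - 1}.ncard

open Finset Equiv

variable {n : ℕ}

def Sset (j : Fin n) (σ : Equiv.Perm (Fin n)) : Finset (Fin n) :=
  (Finset.Iic j).image σ

lemma card_Sset (j : Fin n) (σ : Equiv.Perm (Fin n)) : (Sset j σ).card = (j : ℕ) + 1 := by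
  rw [Sset, Finset.card_image_of_injective _ σ.injective, Fin.card_Iic]

lemma sigma_j_mem (j : Fin n) (σ : Equiv.Perm (Fin n)) : σ j ∈ Sset j σ :=
  Finset.mem_image_of_mem σ (Finset.mem_Iic.2 le_rfl)

noncomputable def cycOf {k : ℕ} (S : Finset (Fin n)) (h : S.card = k + 1) :
    Equiv.Perm (Fin n) :=
  (finRotate (k + 1)).extendDomain (S.orderIsoOfFin h).toEquiv

noncomputable def tOf {k : ℕ} (S : Finset (Fin n)) (h : S.card = k + 1)
    (v : Fin n) (hv : v ∈ S) : Fin (k + 1) :=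
  (S.orderIsoOfFin h).symm ⟨v, hv⟩

lemma cycOf_congr {k : ℕ} {S T : Finset (Fin n)} (hST : S = T)
    (h : S.card = k + 1) (h' : T.card = k + 1) : cycOf S h = cycOf T h' := by
  subst hST; rfl

lemma tOf_congr {k : ℕ} {S T : Finset (Fin n)} (hST : S = T)
    (h : S.card = k + 1) (h' : T.card = k + 1) (v : Fin n) (hv : v ∈ S) (hv' : v ∈ T) :
    tOf S h v hv = tOf T h' v hv' := by
  subst hST; rfl

lemma cycOf_mem {k : ℕ} (S : Finset (Fin n)) (h : S.card = k + 1)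
    {v : Fin n} (hv : v ∈ S) :
    cycOf S h v = ↑(S.orderIsoOfFin h (finRotate (k + 1) ((S.orderIsoOfFin h).symm ⟨v, hv⟩))) := by
  rw [cycOf, Equiv.Perm.extendDomain_apply_subtype _ _ hv]
  rfl

lemma cycOf_mem_mem {k : ℕ} (S : Finset (Fin n)) (h : S.card = k + 1)
    {v : Fin n} (hv : v ∈ S) : cycOf S h v ∈ S := by
  rw [cycOf_mem S h hv]; exact (S.orderIsoOfFin h _).2

lemma cycOf_inv_mem_mem {k : ℕ} (S : Finset (Fin n)) (h : S.card = k + 1)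
    {v : Fin n} (hv : v ∈ S) : (cycOf S h)⁻¹ v ∈ S := by
  rw [cycOf, Equiv.Perm.extendDomain_inv]
  rw [Equiv.Perm.extendDomain_apply_subtype _ _ hv]
  exact Subtype.coe_prop _

/-- the count of bigger values, as a filter card -/
lemma rank_eq (j : Fin n) (σ : Equiv.Perm (Fin n)) :
    ({m : Fin n | m < j ∧ σ j < σ m}).ncard = ((Sset j σ).filter fun v => σ j < v).card := by
  have h1 : {m : Fin n | m < j ∧ σ j < σ m} =
      ↑(Finset.univ.filter fun m : Fin n => m < j ∧ σ j < σ m) := by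
    ext m; simp
  rw [h1, Set.ncard_coe_finset]
  apply Finset.card_bij (fun m _ => σ m)
  · intro m hm
    simp only [Finset.mem_filter, Finset.mem_univ, true_and] at hm
    exact Finset.mem_filter.2 ⟨Finset.mem_image_of_mem σ (Finset.mem_Iic.2 hm.1.le), hm.2⟩
  · intro a _ b _ hab
    exact σ.injective hab
  · intro v hv
    simp only [Finset.mem_filter, Sset, Finset.mem_image] at hv
    obtain ⟨⟨m, hm, rfl⟩, hlt⟩ := hv
    refine ⟨m, ?_, rfl⟩
    have hmj : m < j := lt_of_le_of_ne (Finset.mem_Iic.1 hm)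
      (by rintro rfl; exact absurd hlt (lt_irrefl _))
    simp [hmj, hlt]

/-- number of elements of `S` above the `s`-th smallest is `k - s` -/
lemma card_filter_gt {k : ℕ} (S : Finset (Fin n)) (h : S.card = k + 1) (s : Fin (k + 1)) :
    (S.filter fun v => ↑(S.orderIsoOfFin h s) < v).card = k - (s : ℕ) := by
  have h3 : (S.filter fun v => ↑(S.orderIsoOfFin h s) < v).card = (Finset.Ioi s).card := by
    apply Finset.card_bij' (fun v hv => (S.orderIsoOfFin h).symm ⟨v, (Finset.mem_filter.1 hv).1⟩)
      (fun u _ => (S.orderIsoOfFin h u : Fin n))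
    · intro v hv
      simp only [Finset.mem_filter] at hv
      rw [Finset.mem_Ioi]
      have h2 : (⟨↑(S.orderIsoOfFin h s), (S.orderIsoOfFin h s).2⟩ : {x // x ∈ S}) < ⟨v, hv.1⟩ :=
        Subtype.mk_lt_mk.2 hv.2
      have h3 := (S.orderIsoOfFin h).symm.lt_iff_lt.2 h2
      rw [Subtype.coe_eta, OrderIso.symm_apply_apply] at h3
      exact h3
    · intro v hv
      rw [OrderIso.apply_symm_apply]
    · intro u hu
      rw [Subtype.coe_eta, OrderIso.symm_apply_apply]
    · intro u hu
      rw [Finset.mem_Ioi] at hu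
      refine Finset.mem_filter.2 ⟨(S.orderIsoOfFin h u).2, ?_⟩
      exact Subtype.mk_lt_mk.1 ((S.orderIsoOfFin h).lt_iff_lt.2 hu)
  rw [h3, Fin.card_Ioi]
  simp

lemma Sset_mul (j : Fin n) (σ π : Equiv.Perm (Fin n))
    (hπ : ∀ v ∈ Sset j σ, π v ∈ Sset j σ) : Sset j (π * σ) = Sset j σ := by
  have him : Sset j (π * σ) = (Sset j σ).image π := by
    rw [Sset, Sset, Finset.image_image]; rfl
  rw [him]
  apply Finset.eq_of_subset_of_card_le
  · intro v hv
    obtain ⟨w, hw, rfl⟩ := Finset.mem_image.1 hv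
    exact hπ w hw
  · rw [Finset.card_image_of_injective _ π.injective]

/-- The rank-shifting bijection on permutations. -/
noncomputable def phi (j : Fin n) : Equiv.Perm (Fin n) ≃ Equiv.Perm (Fin n) where
  toFun σ := cycOf (Sset j σ) (card_Sset j σ) * σ
  invFun σ := (cycOf (Sset j σ) (card_Sset j σ))⁻¹ * σ
  left_inv σ := by
    have hS : Sset j (cycOf (Sset j σ) (card_Sset j σ) * σ) = Sset j σ :=
      Sset_mul j σ _ (fun v hv => cycOf_mem_mem _ _ hv)
    dsimp only
    rw [cycOf_congr hS (card_Sset j _) (card_Sset j σ), inv_mul_cancel_left]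
  right_inv σ := by
    have hS : Sset j ((cycOf (Sset j σ) (card_Sset j σ))⁻¹ * σ) = Sset j σ :=
      Sset_mul j σ _ (fun v hv => cycOf_inv_mem_mem _ _ hv)
    dsimp only
    rw [cycOf_congr hS (card_Sset j _) (card_Sset j σ), mul_inv_cancel_left]

noncomputable def tRank (j : Fin n) (σ : Equiv.Perm (Fin n)) : Fin ((j : ℕ) + 1) :=
  tOf (Sset j σ) (card_Sset j σ) (σ j) (sigma_j_mem j σ)

lemma rank_eq_sub (j : Fin n) (σ : Equiv.Perm (Fin n)) :
    ({m : Fin n | m < j ∧ σ j < σ m}).ncard = (j : ℕ) - (tRank j σ : ℕ) := by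
  rw [rank_eq]
  have h0 : σ j = ↑((Sset j σ).orderIsoOfFin (card_Sset j σ) (tRank j σ)) := by
    rw [tRank, tOf, OrderIso.apply_symm_apply]
  calc ((Sset j σ).filter fun v => σ j < v).card
      = ((Sset j σ).filter fun v =>
          ↑((Sset j σ).orderIsoOfFin (card_Sset j σ) (tRank j σ)) < v).card := by
        congr 1; apply Finset.filter_congr; intro v _; rw [← h0]
    _ = (j : ℕ) - (tRank j σ : ℕ) := card_filter_gt _ _ _

lemma Sset_phi (j : Fin n) (σ : Equiv.Perm (Fin n)) : Sset j (phi j σ) = Sset j σ :=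
  Sset_mul j σ _ (fun v hv => cycOf_mem_mem _ _ hv)

lemma tRank_phi (j : Fin n) (σ : Equiv.Perm (Fin n)) :
    tRank j (phi j σ) = finRotate ((j : ℕ) + 1) (tRank j σ) := by
  have hS : Sset j (phi j σ) = Sset j σ := Sset_phi j σ
  have hmem : phi j σ j ∈ Sset j σ := hS ▸ sigma_j_mem j (phi j σ)
  have h1 : tRank j (phi j σ) = tOf (Sset j σ) (card_Sset j σ) (phi j σ j) hmem :=
    tOf_congr hS _ _ _ _ _
  rw [h1]
  have h2 : phi j σ j = cycOf (Sset j σ) (card_Sset j σ) (σ j) := rfl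
  have h3 := cycOf_mem (Sset j σ) (card_Sset j σ) (sigma_j_mem j σ)
  rw [tOf]
  have h4 : (⟨phi j σ j, hmem⟩ : {x // x ∈ Sset j σ}) =
      (Sset j σ).orderIsoOfFin (card_Sset j σ)
        (finRotate ((j : ℕ) + 1)
          (((Sset j σ).orderIsoOfFin (card_Sset j σ)).symm ⟨σ j, sigma_j_mem j σ⟩)) := by
    apply Subtype.ext
    show phi j σ j = _
    rw [h2, h3]
  rw [h4, OrderIso.symm_apply_apply]
  rfl

noncomputable def Mcard (j : Fin n) (s : Fin ((j : ℕ) + 1)) : ℕ :=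
  (Finset.univ.filter fun σ : Equiv.Perm (Fin n) => tRank j σ = s).card

lemma Mcard_rotate (j : Fin n) (s : Fin ((j : ℕ) + 1)) :
    Mcard j (finRotate ((j : ℕ) + 1) s) = Mcard j s := by
  symm
  apply Finset.card_bij (fun σ _ => phi j σ)
  · intro σ hσ
    simp only [Finset.mem_filter, Finset.mem_univ, true_and] at hσ ⊢
    rw [tRank_phi, hσ]
  · intro a _ b _ hab
    exact (phi j).injective hab
  · intro τ hτ
    simp only [Finset.mem_filter, Finset.mem_univ, true_and] at hτ
    refine ⟨(phi j).symm τ, ?_, (phi j).apply_symm_apply τ⟩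
    simp only [Finset.mem_filter, Finset.mem_univ, true_and]
    have := tRank_phi j ((phi j).symm τ)
    rw [(phi j).apply_symm_apply, hτ] at this
    exact (finRotate _).injective this.symm

open Fin.NatCast Fin.CommRing in
lemma Mcard_const (j : Fin n) (s : Fin ((j : ℕ) + 1)) : Mcard j s = Mcard j 0 := by
  have key : ∀ (k : ℕ) (s0 : Fin ((j : ℕ) + 1)), Mcard j (s0 + (k : Fin ((j : ℕ) + 1))) = Mcard j s0 := by
    intro k
    induction k with
    | zero => intro s0; simp
    | succ k ih =>
      intro s0
      have hc : ((((k : ℕ) + 1 : ℕ)) : Fin ((j : ℕ) + 1)) = ((k : ℕ) : Fin ((j : ℕ) + 1)) + 1 := by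
        push_cast; ring
      rw [hc, ← add_assoc, ← finRotate_succ_apply, Mcard_rotate, ih]
  have h := key (s : ℕ) 0
  rwa [zero_add, Fin.cast_val_eq_self] at h

lemma sum_Mcard (j : Fin n) : ((j : ℕ) + 1) * Mcard j 0 = n.factorial := by
  have h := Finset.card_eq_sum_card_fiberwise
    (f := tRank j) (s := (Finset.univ : Finset (Equiv.Perm (Fin n))))
    (t := Finset.univ) (fun σ _ => Finset.mem_univ _)
  have hcard : (Finset.univ : Finset (Equiv.Perm (Fin n))).card = n.factorial := by
    rw [Finset.card_univ, Fintype.card_perm, Fintype.card_fin]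
  rw [hcard] at h
  rw [h]
  have : ∀ s ∈ (Finset.univ : Finset (Fin ((j : ℕ) + 1))),
      (Finset.univ.filter fun σ : Equiv.Perm (Fin n) => tRank j σ = s).card = Mcard j 0 :=
    fun s _ => Mcard_const j s
  rw [Finset.sum_congr rfl this, Finset.sum_const, Finset.card_univ, Fintype.card_fin,
    smul_eq_mul]

lemma fiber_count_le (j : Fin n) (i : ℕ) (hij : i - 1 ≤ (j : ℕ)) :
    ((j : ℕ) + 1) * (Finset.univ.filter fun σ : Equiv.Perm (Fin n) =>
      ({m : Fin n | m < j ∧ σ j < σ m}).ncard = i - 1).card = n.factorial := by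
  have hs : ∀ σ : Equiv.Perm (Fin n),
      (({m : Fin n | m < j ∧ σ j < σ m}).ncard = i - 1) ↔
        (tRank j σ = ⟨(j : ℕ) - (i - 1), by omega⟩) := by
    intro σ
    rw [rank_eq_sub]
    have ht : (tRank j σ : ℕ) < (j : ℕ) + 1 := (tRank j σ).isLt
    constructor
    · intro h
      apply Fin.ext
      show (tRank j σ : ℕ) = (j : ℕ) - (i - 1)
      omega
    · intro h
      rw [h]
      show (j : ℕ) - ((j : ℕ) - (i - 1)) = i - 1
      omega
  simp_rw [hs]
  have : (Finset.univ.filter fun σ : Equiv.Perm (Fin n) =>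
      tRank j σ = ⟨(j : ℕ) - (i - 1), by omega⟩).card = Mcard j 0 := Mcard_const j _
  rw [this, sum_Mcard]

lemma fiber_count_gt (j : Fin n) (i : ℕ) (hij : (j : ℕ) < i - 1) :
    (Finset.univ.filter fun σ : Equiv.Perm (Fin n) =>
      ({m : Fin n | m < j ∧ σ j < σ m}).ncard = i - 1).card = 0 := by
  rw [Finset.card_eq_zero, Finset.filter_eq_empty_iff]
  intro σ _
  rw [rank_eq_sub]
  omega

/-- For `1 ≤ i ≤ n`, the average over all permutations `σ` of `{1, …, n}` of the
number of indices `j` such that `σ j` is the `i`-th largest among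
`σ 1, …, σ j` equals `∑_{j=i}^n 1/j`. -/
theorem expected_numIthRecords (n i : ℕ) (h1 : 1 ≤ i) (h2 : i ≤ n) :
    (∑ σ : Equiv.Perm (Fin n), (numIthRecords i σ : ℝ)) / (n.factorial : ℝ) =
      ∑ j ∈ Finset.Icc i n, (1 : ℝ) / j := by
  have hfact : (n.factorial : ℝ) ≠ 0 := Nat.cast_ne_zero.2 n.factorial_ne_zero
  have hnum : ∀ σ : Equiv.Perm (Fin n), (numIthRecords i σ : ℝ) =
      ∑ j : Fin n, (if ({m : Fin n | m < j ∧ σ j < σ m}).ncard = i - 1 then (1 : ℝ) else 0) := by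
    intro σ
    have hset : {j : Fin n | ({m : Fin n | m < j ∧ σ j < σ m}).ncard = i - 1} =
        ↑(Finset.univ.filter fun j : Fin n =>
          ({m : Fin n | m < j ∧ σ j < σ m}).ncard = i - 1) := by
      ext j; simp
    rw [numIthRecords, hset, Set.ncard_coe_finset, Finset.card_filter]
    push_cast
    rfl
  rw [Finset.sum_congr rfl (fun σ _ => hnum σ), Finset.sum_comm]
  have hinner : ∀ j : Fin n,
      (∑ σ : Equiv.Perm (Fin n),
        if ({m : Fin n | m < j ∧ σ j < σ m}).ncard = i - 1 then (1 : ℝ) else 0)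
      = if i - 1 ≤ (j : ℕ) then (n.factorial : ℝ) / ((j : ℕ) + 1) else 0 := by
    intro j
    rw [Finset.sum_boole]
    by_cases hij : i - 1 ≤ (j : ℕ)
    · rw [if_pos hij]
      have hc := fiber_count_le j i hij
      have hc' := congrArg (fun m : ℕ => (m : ℝ)) hc
      push_cast at hc'
      rw [eq_div_iff (by positivity)]
      linear_combination hc'
    · rw [if_neg hij, fiber_count_gt j i (by omega)]
      simp
  rw [Finset.sum_congr rfl (fun j _ => hinner j), Finset.sum_div]
  have hterm : ∀ j : Fin n,
      (if i - 1 ≤ (j : ℕ) then (n.factorial : ℝ) / ((j : ℕ) + 1) else 0) / (n.factorial : ℝ)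
      = if i - 1 ≤ (j : ℕ) then (1 : ℝ) / ((j : ℕ) + 1) else 0 := by
    intro j
    split
    · rw [div_div, mul_comm, ← div_div, div_self hfact]
    · rw [zero_div]
  rw [Finset.sum_congr rfl (fun j _ => hterm j)]
  rw [Fin.sum_univ_eq_sum_range (fun k => if i - 1 ≤ k then (1 : ℝ) / ((k : ℝ) + 1) else 0) n]
  rw [← Finset.sum_filter]
  have hIco : (Finset.range n).filter (fun k => i - 1 ≤ k) = Finset.Ico (i - 1) n := by
    ext k
    simp only [Finset.mem_filter, Finset.mem_range, Finset.mem_Ico]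
    omega
  rw [hIco]
  apply Finset.sum_nbij' (i := fun k => k + 1) (j := fun k => k - 1)
  · intro a ha
    simp only [Finset.mem_Ico] at ha
    simp only [Finset.mem_Icc]
    omega
  · intro a ha
    simp only [Finset.mem_Icc] at ha
    simp only [Finset.mem_Ico]
    omega
  · intro a ha
    omega
  · intro a ha
    simp only [Finset.mem_Icc] at ha
    omega
  · intro a ha
    push_cast
    ring
end
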